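/- Let |ψ⟩ be an n-qubit stabilizer state with stabilizer group S, and let P = ∏_{j=1}^n P_j with each P_j ∈ {X_j, Y_j, Z_j} be a full-support Pauli string. Let P∩S denote the set of elements of S contained in P (obtainable by replacing some tensor factors of P with identity, up to sign). Suppose measuring each P_j yields outcome string y ∈ {0,1}^n. Then Pr[y] = |P∩S|/2^n if for every S = (−1)^{λ_S} ∏_j P_j^{f_j^{(S)}} ∈ P∩S one has f^{(S)}·y = λ_S mod 2, and Pr[y] = 0 otherwise. -/

import Mathlib

open Matrix
open scoped Classical

/-- Single-qubit Pauli `X`. -/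
noncomputable def sigmaX : Matrix (ZMod 2) (ZMod 2) ℂ :=
  Matrix.of fun s t => if s = t + 1 then 1 else 0

/-- Single-qubit Pauli `Y`. -/
noncomputable def sigmaY : Matrix (ZMod 2) (ZMod 2) ℂ :=
  Matrix.of fun s t => if s = t + 1 then Complex.I * (-1 : ℂ) ^ t.val else 0

/-- Single-qubit Pauli `Z`. -/
noncomputable def sigmaZ : Matrix (ZMod 2) (ZMod 2) ℂ :=
  Matrix.diagonal fun t => (-1 : ℂ) ^ t.val

/-- The `n`-qubit Pauli operator `X^a Z^b` (no phase). -/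
noncomputable def PauliMat {ι : Type*} [Fintype ι] [DecidableEq ι] (a b : ι → ZMod 2) :
    Matrix (ι → ZMod 2) (ι → ZMod 2) ℂ :=
  Matrix.of fun s t => if s = t + a then (-1 : ℂ) ^ (∑ j, (b j * t j).val) else 0


noncomputable def chi (x : ZMod 2) : ℂ := (-1 : ℂ) ^ x.val

lemma zmod2_cases (x : ZMod 2) : x = 0 ∨ x = 1 := by revert x; decide

lemma chi_zero : chi 0 = 1 := rfl

lemma chi_one : chi 1 = -1 := by
  show (-1 : ℂ) ^ (1 : ZMod 2).val = -1
  rw [show (1 : ZMod 2).val = 1 from rfl, pow_one]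

lemma chi_add (x y : ZMod 2) : chi (x + y) = chi x * chi y := by
  rcases zmod2_cases x with hx | hx <;> rcases zmod2_cases y with hy | hy <;>
    subst hx <;> subst hy <;>
    simp [show (1 + 1 : ZMod 2) = 0 from by decide, chi_zero, chi_one]

lemma chi_mul_self (x : ZMod 2) : chi x * chi x = 1 := by
  rcases zmod2_cases x with hx | hx <;> subst hx <;> simp [chi_zero, chi_one]

lemma chi_ne_zero (x : ZMod 2) : chi x ≠ 0 := by
  rcases zmod2_cases x with hx | hx <;> subst hx <;> simp [chi_zero, chi_one]

lemma chi_inj {x y : ZMod 2} (h : chi x = chi y) : x = y := by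
  rcases zmod2_cases x with hx | hx <;> rcases zmod2_cases y with hy | hy <;>
    subst hx <;> subst hy <;> first
      | rfl
      | (rw [chi_zero, chi_one] at h; exact absurd h (by norm_num))
      | (rw [chi_one, chi_zero] at h; exact absurd h (by norm_num))

lemma chi_pm (x : ZMod 2) : chi x = 1 ∨ chi x = -1 := by
  rcases zmod2_cases x with hx | hx <;> subst hx <;>
    simp [chi_zero, chi_one]

lemma star_chi (x : ZMod 2) : star (chi x) = chi x := by
  rcases zmod2_cases x with hx | hx <;> subst hx <;>
    simp [chi_zero, chi_one]

lemma chi_prod {ι : Type*} (s : Finset ι) (g : ι → ZMod 2) :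
    ∏ j ∈ s, chi (g j) = chi (∑ j ∈ s, g j) := by
  classical
  induction s using Finset.cons_induction with
  | empty => simp [chi_zero]
  | cons a s ha ih => rw [Finset.prod_cons, Finset.sum_cons, chi_add, ih]

lemma neg_one_pow_sum_val {ι : Type*} (s : Finset ι) (g : ι → ZMod 2) :
    (-1 : ℂ) ^ (∑ j ∈ s, (g j).val) = chi (∑ j ∈ s, g j) := by
  classical
  rw [← chi_prod, ← Finset.prod_pow_eq_pow_sum]
  rfl
noncomputable def tensorM (n : ℕ) (M : Fin n → Matrix (ZMod 2) (ZMod 2) ℂ) :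
    Matrix (Fin n → ZMod 2) (Fin n → ZMod 2) ℂ :=
  Matrix.of fun s t => ∏ j, M j (s j) (t j)

lemma tensorM_apply (n : ℕ) (M : Fin n → Matrix (ZMod 2) (ZMod 2) ℂ) (s t : Fin n → ZMod 2) :
    tensorM n M s t = ∏ j, M j (s j) (t j) := rfl

lemma tensorM_mul (n : ℕ) (M N : Fin n → Matrix (ZMod 2) (ZMod 2) ℂ) :
    tensorM n M * tensorM n N = tensorM n (fun j => M j * N j) := by
  ext s t
  rw [Matrix.mul_apply, tensorM_apply]
  have : ∀ j : Fin n, (M j * N j) (s j) (t j) = ∑ x : ZMod 2, M j (s j) x * N j x (t j) :=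
    fun j => Matrix.mul_apply
  simp_rw [this]
  rw [Finset.prod_univ_sum (fun _ => Finset.univ) (fun j x => M j (s j) x * N j x (t j)),
    Fintype.piFinset_univ]
  apply Finset.sum_congr rfl
  intro u _
  rw [tensorM_apply, tensorM_apply, ← Finset.prod_mul_distrib]

lemma tensorM_smul (n : ℕ) (c : Fin n → ℂ) (M : Fin n → Matrix (ZMod 2) (ZMod 2) ℂ) :
    tensorM n (fun j => c j • M j) = (∏ j, c j) • tensorM n M := by
  ext s t
  simp only [tensorM_apply, Matrix.smul_apply, smul_eq_mul]
  rw [← Finset.prod_mul_distrib]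

lemma tensorM_one (n : ℕ) : tensorM n (fun _ => 1) = 1 := by
  ext s t
  simp only [tensorM_apply, Matrix.one_apply]
  by_cases h : s = t
  · subst h; simp
  · rw [if_neg h]
    obtain ⟨j, hj⟩ := Function.ne_iff.mp h
    exact Finset.prod_eq_zero (Finset.mem_univ j) (by simp [Matrix.one_apply, hj])

lemma tensorM_trace (n : ℕ) (M : Fin n → Matrix (ZMod 2) (ZMod 2) ℂ) :
    (tensorM n M).trace = ∏ j, (M j).trace := by
  simp only [Matrix.trace, Matrix.diag, tensorM_apply]
  rw [Finset.prod_univ_sum (fun _ => Finset.univ) (fun j x => M j x x),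
    Fintype.piFinset_univ]

lemma tensorM_sum (n : ℕ) (G : Fin n → ZMod 2 → Matrix (ZMod 2) (ZMod 2) ℂ) :
    tensorM n (fun j => ∑ c : ZMod 2, G j c) =
      ∑ f : Fin n → ZMod 2, tensorM n (fun j => G j (f j)) := by
  ext s t
  simp only [tensorM_apply, Matrix.sum_apply]
  rw [Finset.prod_univ_sum (fun _ => Finset.univ) (fun j c => G j c (s j) (t j)),
    Fintype.piFinset_univ]

lemma sum_zmod2 {M : Type*} [AddCommMonoid M] (g : ZMod 2 → M) :
    ∑ x : ZMod 2, g x = g 0 + g 1 := by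
  exact Fin.sum_univ_two g

noncomputable def P1 (a b : ZMod 2) : Matrix (ZMod 2) (ZMod 2) ℂ :=
  Matrix.of fun s t => if s = t + a then chi (b * t) else 0

lemma P1_apply (a b s t : ZMod 2) : P1 a b s t = if s = t + a then chi (b * t) else 0 := rfl

lemma P1_one : P1 0 0 = 1 := by
  ext s t
  rw [P1_apply, Matrix.one_apply, add_zero, zero_mul, chi_zero]

lemma P1_mul (a b c d : ZMod 2) :
    P1 a b * P1 c d = chi (b * c) • P1 (a + c) (b + d) := by
  ext s t
  rw [Matrix.mul_apply, sum_zmod2]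
  rcases zmod2_cases a with h | h <;> subst h <;>
  rcases zmod2_cases b with h | h <;> subst h <;>
  rcases zmod2_cases c with h | h <;> subst h <;>
  rcases zmod2_cases d with h | h <;> subst h <;>
  rcases zmod2_cases s with h | h <;> subst h <;>
  rcases zmod2_cases t with h | h <;> subst h <;>
    simp [P1_apply, Matrix.smul_apply, chi_zero, chi_one,
      show (0 : ZMod 2) + 0 = 0 from rfl, show (0 : ZMod 2) + 1 = 1 from rfl,
      show (1 : ZMod 2) + 0 = 1 from rfl, show (1 : ZMod 2) + 1 = 0 from by decide,
      show (0 : ZMod 2) * 0 = 0 from rfl, show (0 : ZMod 2) * 1 = 0 from rfl,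
      show (1 : ZMod 2) * 0 = 0 from rfl, show (1 : ZMod 2) * 1 = 1 from by decide,
      show (0 : ZMod 2) ≠ 1 from by decide, show (1 : ZMod 2) ≠ 0 from by decide,
      show (2 : ZMod 2) = 0 from by decide, show (3 : ZMod 2) = 1 from by decide]

lemma P1_trace (a b : ZMod 2) :
    (P1 a b).trace = if a = 0 ∧ b = 0 then 2 else 0 := by
  rw [Matrix.trace]
  rw [show (P1 a b).diag = fun t => P1 a b t t from rfl]
  rw [sum_zmod2]
  rcases zmod2_cases a with h | h <;> subst h <;>
  rcases zmod2_cases b with h | h <;> subst h <;>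
    simp [P1_apply, chi_zero, chi_one,
      show (0 : ZMod 2) + 0 = 0 from rfl, show (0 : ZMod 2) + 1 = 1 from rfl,
      show (1 : ZMod 2) + 0 = 1 from rfl, show (1 : ZMod 2) + 1 = 0 from by decide,
      show (0 : ZMod 2) * 0 = 0 from rfl, show (0 : ZMod 2) * 1 = 0 from rfl,
      show (1 : ZMod 2) * 0 = 0 from rfl, show (1 : ZMod 2) * 1 = 1 from by decide,
      show (0 : ZMod 2) ≠ 1 from by decide, show (1 : ZMod 2) ≠ 0 from by decide,
      show (2 : ZMod 2) = 0 from by decide, show (3 : ZMod 2) = 1 from by decide] <;>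
    norm_num

lemma P1_conjTranspose (a b : ZMod 2) :
    (P1 a b)ᴴ = chi (b * a) • P1 a b := by
  ext s t
  rw [Matrix.conjTranspose_apply]
  rcases zmod2_cases a with h | h <;> subst h <;>
  rcases zmod2_cases b with h | h <;> subst h <;>
  rcases zmod2_cases s with h | h <;> subst h <;>
  rcases zmod2_cases t with h | h <;> subst h <;>
    simp [P1_apply, Matrix.smul_apply, chi_zero, chi_one,
      show (0 : ZMod 2) + 0 = 0 from rfl, show (0 : ZMod 2) + 1 = 1 from rfl,
      show (1 : ZMod 2) + 0 = 1 from rfl, show (1 : ZMod 2) + 1 = 0 from by decide,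
      show (0 : ZMod 2) * 0 = 0 from rfl, show (0 : ZMod 2) * 1 = 0 from rfl,
      show (1 : ZMod 2) * 0 = 0 from rfl, show (1 : ZMod 2) * 1 = 1 from by decide,
      show (0 : ZMod 2) ≠ 1 from by decide, show (1 : ZMod 2) ≠ 0 from by decide,
      show (2 : ZMod 2) = 0 from by decide, show (3 : ZMod 2) = 1 from by decide]
lemma PauliMat_apply {n : ℕ} (a b s t : Fin n → ZMod 2) :
    PauliMat a b s t = if s = t + a then (-1 : ℂ) ^ (∑ j, (b j * t j).val) else 0 := rfl

lemma PauliMat_eq_tensor {n : ℕ} (a b : Fin n → ZMod 2) :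
    PauliMat a b = tensorM n (fun j => P1 (a j) (b j)) := by
  ext s t
  rw [tensorM_apply, PauliMat_apply]
  simp only [P1_apply]
  by_cases h : s = t + a
  · rw [if_pos h, neg_one_pow_sum_val, ← chi_prod]
    refine Finset.prod_congr rfl fun j _ => ?_
    rw [if_pos (by rw [h]; rfl)]
  · rw [if_neg h]
    obtain ⟨j, hj⟩ : ∃ j, s j ≠ t j + a j := by
      by_contra hc; push_neg at hc; exact h (funext hc)
    exact (Finset.prod_eq_zero (Finset.mem_univ j) (by rw [if_neg hj])).symm

lemma pauliMat_mul {n : ℕ} (a b c d : Fin n → ZMod 2) :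
    PauliMat a b * PauliMat c d
      = chi (∑ j, b j * c j) • PauliMat (a + c) (b + d) := by
  rw [PauliMat_eq_tensor a b, PauliMat_eq_tensor c d, tensorM_mul]
  have : (fun j => P1 (a j) (b j) * P1 (c j) (d j))
      = fun j => chi (b j * c j) • P1 (a j + c j) (b j + d j) := by
    funext j; exact P1_mul _ _ _ _
  rw [this, tensorM_smul, chi_prod, PauliMat_eq_tensor]
  rfl

lemma pauliMat_zero {n : ℕ} : PauliMat (0 : Fin n → ZMod 2) 0 = 1 := by
  rw [PauliMat_eq_tensor]
  have : (fun j : Fin n => P1 ((0 : Fin n → ZMod 2) j) ((0 : Fin n → ZMod 2) j))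
      = fun _ => (1 : Matrix (ZMod 2) (ZMod 2) ℂ) := by
    funext j; show P1 0 0 = 1; exact P1_one
  rw [this, tensorM_one]

lemma pauliMat_trace {n : ℕ} (a b : Fin n → ZMod 2) :
    (PauliMat a b).trace = if a = 0 ∧ b = 0 then (2 : ℂ) ^ n else 0 := by
  rw [PauliMat_eq_tensor, tensorM_trace]
  simp only [P1_trace]
  by_cases h : a = 0 ∧ b = 0
  · rw [if_pos h]
    obtain ⟨ha, hb⟩ := h
    subst ha; subst hb
    simp
  · rw [if_neg h]
    obtain ⟨j, hj⟩ : ∃ j, ¬(a j = 0 ∧ b j = 0) := by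
      by_contra hc; push_neg at hc
      exact h ⟨funext fun j => ((hc j).1), funext fun j => ((hc j).2)⟩
    exact Finset.prod_eq_zero (Finset.mem_univ j) (by rw [if_neg hj])

lemma tensorM_conjTranspose (n : ℕ) (M : Fin n → Matrix (ZMod 2) (ZMod 2) ℂ) :
    (tensorM n M)ᴴ = tensorM n (fun j => (M j)ᴴ) := by
  ext s t
  rw [Matrix.conjTranspose_apply, tensorM_apply, tensorM_apply, star_prod]
  exact Finset.prod_congr rfl fun j _ => (Matrix.conjTranspose_apply _ _ _).symm

lemma pauliMat_conjTranspose {n : ℕ} (a b : Fin n → ZMod 2) :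
    (PauliMat a b)ᴴ = chi (∑ j, b j * a j) • PauliMat a b := by
  rw [PauliMat_eq_tensor, tensorM_conjTranspose]
  have : (fun j => (P1 (a j) (b j))ᴴ) = fun j => chi (b j * a j) • P1 (a j) (b j) := by
    funext j; exact P1_conjTranspose _ _
  rw [this, tensorM_smul, chi_prod, ← PauliMat_eq_tensor]

lemma pauli_unique {n : ℕ} {μ ν : ℂ} {a b c d : Fin n → ZMod 2}
    (h : μ • PauliMat a b = ν • PauliMat c d) (hν : ν ≠ 0) :
    a = c ∧ b = d ∧ μ = ν := by
  have happ : ∀ s t, μ * PauliMat a b s t = ν * PauliMat c d s t := by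
    intro s t
    have := congrFun (congrFun h s) t
    simpa [Matrix.smul_apply] using this
  have h0 := happ c 0
  rw [PauliMat_apply, PauliMat_apply,
    if_pos (show c = 0 + c from by rw [zero_add])] at h0
  simp only [Pi.zero_apply, mul_zero, ZMod.val_zero, Finset.sum_const_zero, pow_zero,
    mul_one] at h0
  have hac : a = c := by
    by_contra hac
    rw [if_neg (show ¬ c = 0 + a from fun hh => hac (by rw [zero_add] at hh; rw [hh])),
      mul_zero] at h0
    exact hν h0.symm
  subst hac
  rw [if_pos (show a = 0 + a from by rw [zero_add]), mul_one] at h0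
  subst h0
  refine ⟨rfl, funext fun j => ?_, rfl⟩
  set ej : Fin n → ZMod 2 := Pi.single j 1 with hej
  have hj := happ (ej + a) ej
  rw [PauliMat_apply, PauliMat_apply, if_pos rfl, if_pos rfl,
    neg_one_pow_sum_val, neg_one_pow_sum_val] at hj
  have hsum : ∀ e : Fin n → ZMod 2, (∑ k, e k * ej k) = e j := by
    intro e
    rw [Finset.sum_eq_single j]
    · rw [hej, Pi.single_eq_same, mul_one]
    · intro k _ hk; rw [hej, Pi.single_eq_of_ne hk, mul_zero]
    · intro hk; exact absurd (Finset.mem_univ _) hk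
  rw [hsum b, hsum d] at hj
  exact chi_inj (mul_left_cancel₀ hν hj)
lemma sigmaX_eq : sigmaX = P1 1 0 := by
  ext s t
  rw [P1_apply, zero_mul, chi_zero]
  rfl

lemma sigmaY_eq : sigmaY = Complex.I • P1 1 1 := by
  ext s t
  rw [Matrix.smul_apply, P1_apply, one_mul, smul_eq_mul, mul_ite, mul_zero]
  rfl

lemma sigmaZ_eq : sigmaZ = P1 0 1 := by
  ext s t
  rw [P1_apply, one_mul, add_zero]
  show (Matrix.diagonal fun t => (-1 : ℂ) ^ t.val) s t = _
  by_cases h : s = t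
  · subst h; rw [Matrix.diagonal_apply_eq, if_pos rfl]; rfl
  · rw [Matrix.diagonal_apply_ne _ h, if_neg h]

lemma p_rep {n : ℕ} (p : Fin n → Matrix (ZMod 2) (ZMod 2) ℂ)
    (hp : ∀ j, p j = sigmaX ∨ p j = sigmaY ∨ p j = sigmaZ) :
    ∀ j, ∃ (m : ℂ) (α β : ZMod 2), (m = 1 ∨ m = Complex.I) ∧ (α = 1 ∨ β = 1) ∧
      m * m * chi (β * α) = 1 ∧ p j = m • P1 α β := by
  intro j
  rcases hp j with h | h | h
  · exact ⟨1, 1, 0, Or.inl rfl, Or.inl rfl,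
      by rw [show ((0 : ZMod 2) * 1) = 0 from by decide, chi_zero]; ring,
      by rw [h, sigmaX_eq, one_smul]⟩
  · exact ⟨Complex.I, 1, 1, Or.inr rfl, Or.inl rfl,
      by rw [show ((1 : ZMod 2) * 1) = 1 from by decide, chi_one, Complex.I_mul_I]; ring,
      by rw [h, sigmaY_eq]⟩
  · exact ⟨1, 0, 1, Or.inl rfl, Or.inr rfl,
      by rw [show ((1 : ZMod 2) * 0) = 0 from by decide, chi_zero]; ring,
      by rw [h, sigmaZ_eq, one_smul]⟩

lemma zmod2_ne_zero {x : ZMod 2} (h : x ≠ 0) : x = 1 := (zmod2_cases x).resolve_left h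

lemma zmod2_eq_of_add_eq_zero {x y : ZMod 2} (h : x + y = 0) : x = y := by
  rcases zmod2_cases x with hx | hx <;> rcases zmod2_cases y with hy | hy <;>
    subst hx <;> subst hy <;> first | rfl | (exfalso; revert h; decide)

lemma zmod2_add_self (x : ZMod 2) : x + x = 0 := by
  rcases zmod2_cases x with h | h <;> subst h <;> decide

/-- Stabilizer-submeasurement outcome probabilities (Lemma 2, Appendix A): measuring a
full-support Pauli string `P = ∏_j P_j` (`P_j ∈ {X,Y,Z}`) on a stabilizer state `|ψ⟩`
with stabilizer group `S`, an outcome `y` has probability `|P∩S|/2ⁿ` when it satisfies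
`f⁽ˢ⁾·y = λ_S` for every stabilizer submeasurement `S = (-1)^{λ_S} ∏_j P_j^{f_j}` of
`P`, and probability `0` otherwise. -/
theorem stabilizer_submeasurement_probabilities (n : ℕ)
    (ψ : (Fin n → ZMod 2) → ℂ)
    (hnorm : ∑ s, ψ s * star (ψ s) = 1)
    (S : Finset (Matrix (Fin n → ZMod 2) (Fin n → ZMod 2) ℂ))
    (hcard : S.card = 2 ^ n)
    (hpauli : ∀ P ∈ S, ∃ (μ : ℂ) (a b : Fin n → ZMod 2),
      (μ = 1 ∨ μ = -1 ∨ μ = Complex.I ∨ μ = -Complex.I) ∧ P = μ • PauliMat a b)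
    (hgroup : ∀ P ∈ S, ∀ Q ∈ S, P * Q ∈ S)
    (habel : ∀ P ∈ S, ∀ Q ∈ S, P * Q = Q * P)
    (hnoneg : (-1 : ℂ) • (1 : Matrix (Fin n → ZMod 2) (Fin n → ZMod 2) ℂ) ∉ S)
    (hfix : ∀ P ∈ S, P.mulVec ψ = ψ)
    -- the measured full-support Pauli string: a single-qubit Pauli on every site
    (p : Fin n → Matrix (ZMod 2) (ZMod 2) ℂ)
    (hp : ∀ j, p j = sigmaX ∨ p j = sigmaY ∨ p j = sigmaZ)
    -- the observed outcome string
    (y : Fin n → ZMod 2)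
    -- `Emb f` is the sub-string of `P` supported on `f`, tensored with identities
    (Emb : (Fin n → ZMod 2) → Matrix (Fin n → ZMod 2) (Fin n → ZMod 2) ℂ)
    (hEmb : ∀ f, Emb f =
      Matrix.of fun s t => ∏ j, ((p j) ^ (f j).val) (s j) (t j))
    -- the projector onto the joint outcome `y` of the local measurements of the `P_j`
    (Proj : Matrix (Fin n → ZMod 2) (Fin n → ZMod 2) ℂ)
    (hProj : Proj = Matrix.of fun s t =>
      ∏ j, ((2⁻¹ : ℂ) • ((1 : Matrix (ZMod 2) (ZMod 2) ℂ) +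
        ((-1 : ℂ) ^ (y j).val) • p j)) (s j) (t j))
    -- the probability of the outcome `y`
    (Pr : ℂ) (hPr : Pr = ∑ s, star (ψ s) * (Proj.mulVec ψ) s)
    -- `T = P ∩ S`, the stabilizer submeasurements of `P`
    (T : Finset (Matrix (Fin n → ZMod 2) (Fin n → ZMod 2) ℂ))
    (hT : T = S.filter fun Q => ∃ (f : Fin n → ZMod 2) (lam : ZMod 2),
      Q = ((-1 : ℂ) ^ lam.val) • Emb f) :
    ((∀ Q ∈ T, ∀ (f : Fin n → ZMod 2) (lam : ZMod 2),
        Q = ((-1 : ℂ) ^ lam.val) • Emb f → (∑ j, f j * y j) = lam) →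
      Pr = (T.card : ℂ) / 2 ^ n) ∧
    ((¬ ∀ Q ∈ T, ∀ (f : Fin n → ZMod 2) (lam : ZMod 2),
        Q = ((-1 : ℂ) ^ lam.val) • Emb f → (∑ j, f j * y j) = lam) →
      Pr = 0) := by
  classical
  -- abbreviations
  set c2 : ℂ := (2 : ℂ) ^ n with hc2def
  have hc2ne : c2 ≠ 0 := pow_ne_zero _ two_ne_zero
  -- per-site representation
  obtain ⟨m, α, β, hm, hαβ, hmchi, hrep⟩ :
      ∃ (m : Fin n → ℂ) (α β : Fin n → ZMod 2),
        (∀ j, m j = 1 ∨ m j = Complex.I) ∧ (∀ j, α j = 1 ∨ β j = 1) ∧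
        (∀ j, m j * m j * chi (β j * α j) = 1) ∧ (∀ j, p j = m j • P1 (α j) (β j)) := by
    choose m α β h1 h2 h3 h4 using p_rep p hp
    exact ⟨m, α, β, h1, h2, h3, h4⟩
  have hmne : ∀ j, m j ≠ 0 := by
    intro j; rcases hm j with h | h <;> rw [h] <;> simp [Complex.I_ne_zero]
  -- Emb as a tensor product
  have hEmbT : ∀ f, Emb f = tensorM n (fun j => (p j) ^ (f j).val) := hEmb
  -- scalar and bit-string data of Emb f
  set ν : (Fin n → ZMod 2) → ℂ := fun f => ∏ j, (m j) ^ (f j).val with hνdef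
  set A : (Fin n → ZMod 2) → (Fin n → ZMod 2) := fun f j => f j * α j with hAdef
  set B : (Fin n → ZMod 2) → (Fin n → ZMod 2) := fun f j => f j * β j with hBdef
  have hνne : ∀ f, ν f ≠ 0 := by
    intro f
    exact Finset.prod_ne_zero_iff.mpr fun j _ => pow_ne_zero _ (hmne j)
  have hpow : ∀ (j : Fin n) (x : ZMod 2),
      (p j) ^ x.val = (m j ^ x.val) • P1 (x * α j) (x * β j) := by
    intro j x
    rcases zmod2_cases x with h | h <;> subst h
    · rw [show (0 : ZMod 2).val = 0 from rfl]
      rw [pow_zero, pow_zero, zero_mul, zero_mul, P1_one, one_smul]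
    · rw [show (1 : ZMod 2).val = 1 from rfl]
      rw [pow_one, pow_one, one_mul, one_mul]
      exact hrep j
  have hEmbRep : ∀ f, Emb f = ν f • PauliMat (A f) (B f) := by
    intro f
    rw [hEmbT]
    have h1 : (fun j => p j ^ (f j).val)
        = fun j => (m j ^ (f j).val) • P1 (A f j) (B f j) :=
      funext fun j => hpow j (f j)
    rw [h1, tensorM_smul, ← PauliMat_eq_tensor]
  -- multiplicativity of Emb
  have hpsq : ∀ j, p j * p j = 1 := by
    intro j
    rw [hrep j, Matrix.smul_mul, Matrix.mul_smul, smul_smul, P1_mul,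
      zmod2_add_self, zmod2_add_self, P1_one, smul_smul, hmchi j, one_smul]
  have hppow : ∀ (j : Fin n) (x x' : ZMod 2),
      p j ^ x.val * p j ^ x'.val = p j ^ ((x + x').val) := by
    intro j x x'
    rcases zmod2_cases x with h | h <;> rcases zmod2_cases x' with h' | h' <;>
      subst h <;> subst h' <;>
      simp [show ((0:ZMod 2) + 0) = 0 from rfl, show ((0:ZMod 2) + 1) = 1 from rfl,
        show ((1:ZMod 2) + 0) = 1 from rfl, show ((1:ZMod 2) + 1) = 0 from by decide,
        show (0 : ZMod 2).val = 0 from rfl, show (1 : ZMod 2).val = 1 from rfl,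
        hpsq j]
  have hEmbAdd : ∀ f g, Emb f * Emb g = Emb (f + g) := by
    intro f g
    rw [hEmbT, hEmbT, hEmbT, tensorM_mul]
    have hfun : (fun j => p j ^ (f j).val * p j ^ (g j).val)
        = fun j => p j ^ ((f + g) j).val :=
      funext fun j => hppow j (f j) (g j)
    rw [hfun]
  have hEmbZero : Emb 0 = 1 := by
    rw [hEmbT]
    have : (fun j => p j ^ ((0 : Fin n → ZMod 2) j).val)
        = fun _ => (1 : Matrix (ZMod 2) (ZMod 2) ℂ) := by
      funext j
      rw [show ((0 : Fin n → ZMod 2) j).val = 0 from rfl, pow_zero]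
    rw [this, tensorM_one]
  have hEmbSq : ∀ f, Emb f * Emb f = 1 := by
    intro f
    rw [hEmbAdd, show f + f = 0 from funext fun j => zmod2_add_self _, hEmbZero]
  have hEmbInj : ∀ (l l' : ZMod 2) (f g : Fin n → ZMod 2),
      chi l • Emb f = chi l' • Emb g → f = g := by
    intro l l' f g h
    rw [hEmbRep f, hEmbRep g, smul_smul, smul_smul] at h
    obtain ⟨hA, hB, -⟩ := pauli_unique h (mul_ne_zero (chi_ne_zero _) (hνne g))
    funext j
    have h1 : f j * α j = g j * α j := congrFun hA j
    have h2 : f j * β j = g j * β j := congrFun hB j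
    rcases hαβ j with h' | h'
    · rw [h'] at h1; rwa [mul_one, mul_one] at h1
    · rw [h'] at h2; rwa [mul_one, mul_one] at h2
  -- basic stabilizer-group facts
  have hsq1 : ∀ P ∈ S, P * P = 1 := by
    intro P hP
    obtain ⟨μ, a, b, hμ, hPr'⟩ := hpauli P hP
    have h2 : P * P = (μ * μ * chi (∑ j, b j * a j)) • 1 := by
      rw [hPr', Matrix.smul_mul, Matrix.mul_smul, smul_smul, pauliMat_mul,
        show a + a = 0 from funext fun j => zmod2_add_self _,
        show b + b = 0 from funext fun j => zmod2_add_self _,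
        pauliMat_zero, smul_smul, mul_assoc]
    have hc : μ * μ * chi (∑ j, b j * a j) = 1 ∨
        μ * μ * chi (∑ j, b j * a j) = -1 := by
      rcases chi_pm (∑ j, b j * a j) with h | h <;> rw [h] <;>
        rcases hμ with rfl | rfl | rfl | rfl <;>
        norm_num [Complex.I_mul_I]
    rcases hc with hc | hc
    · rw [h2, hc, one_smul]
    · exfalso
      apply hnoneg
      have : P * P = (-1 : ℂ) • 1 := by rw [h2, hc]
      exact this ▸ hgroup P hP P hP
  have honeS : (1 : Matrix (Fin n → ZMod 2) (Fin n → ZMod 2) ℂ) ∈ S := by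
    have hne : S.Nonempty := by
      rw [← Finset.card_pos, hcard]; positivity
    obtain ⟨P, hP⟩ := hne
    exact hsq1 P hP ▸ hgroup P hP P hP
  have hsmul1 : ∀ {c d : ℂ},
      c • (1 : Matrix (Fin n → ZMod 2) (Fin n → ZMod 2) ℂ) = d • 1 → c = d := by
    intro c d h
    have := congrFun (congrFun h 0) 0
    simpa [Matrix.smul_apply, Matrix.one_apply] using this
  have hherm : ∀ P ∈ S, Pᴴ = P := by
    intro P hP
    obtain ⟨μ, a, b, hμ, hPr'⟩ := hpauli P hP
    have hsq := hsq1 P hP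
    have h2 : (μ * (μ * chi (∑ j, b j * a j))) • 1
        = (1 : ℂ) • (1 : Matrix (Fin n → ZMod 2) (Fin n → ZMod 2) ℂ) := by
      rw [one_smul]
      rw [hPr', Matrix.smul_mul, Matrix.mul_smul, smul_smul, pauliMat_mul,
        show a + a = 0 from funext fun j => zmod2_add_self _,
        show b + b = 0 from funext fun j => zmod2_add_self _,
        pauliMat_zero, smul_smul, mul_assoc] at hsq
      exact hsq
    have hscal : μ * (μ * chi (∑ j, b j * a j)) = 1 := hsmul1 h2
    rw [hPr', Matrix.conjTranspose_smul, pauliMat_conjTranspose, smul_smul]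
    congr 1
    rcases chi_pm (∑ j, b j * a j) with h | h <;> rw [h] at hscal ⊢ <;>
      rcases hμ with rfl | rfl | rfl | rfl <;>
      norm_num [Complex.I_mul_I, Complex.conj_I] at hscal <;>
      norm_num [Complex.I_mul_I, Complex.conj_I]
  -- the rank-one projector onto ψ and the sum over the stabilizer group
  set Pψ : Matrix (Fin n → ZMod 2) (Fin n → ZMod 2) ℂ :=
    Matrix.of (fun s t => ψ s * star (ψ t)) with hPψdef
  have hPψ_apply : ∀ s t, Pψ s t = ψ s * star (ψ t) := fun s t => rfl
  set Sig : Matrix (Fin n → ZMod 2) (Fin n → ZMod 2) ℂ := ∑ P ∈ S, P with hSigdef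
  have hcastc2 : ((S.card : ℂ)) = c2 := by
    rw [hcard, hc2def]; push_cast; ring
  have hSigψ : Sig.mulVec ψ = c2 • ψ := by
    rw [hSigdef]
    have h1 : (∑ P ∈ S, P).mulVec ψ = ∑ P ∈ S, P.mulVec ψ := by
      ext s
      rw [Finset.sum_apply]
      rw [show ((∑ P ∈ S, P).mulVec ψ) s = ∑ u, (∑ P ∈ S, P) s u * ψ u from rfl]
      simp only [Matrix.sum_apply, Finset.sum_mul]
      rw [Finset.sum_comm]
      exact Finset.sum_congr rfl fun P _ => rfl
    rw [h1, Finset.sum_congr rfl hfix, Finset.sum_const, ← hcastc2]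
    ext s
    simp
  have hSigPψ : Sig * Pψ = c2 • Pψ := by
    ext s t
    rw [Matrix.mul_apply, Matrix.smul_apply, hPψ_apply, smul_eq_mul]
    calc ∑ u, Sig s u * Pψ u t
        = (∑ u, Sig s u * ψ u) * star (ψ t) := by
          rw [Finset.sum_mul]
          exact Finset.sum_congr rfl fun u _ => by rw [hPψ_apply]; ring
      _ = (Sig.mulVec ψ s) * star (ψ t) := rfl
      _ = c2 * (ψ s * star (ψ t)) := by rw [hSigψ]; simp [mul_assoc]
  have hPψherm : Pψᴴ = Pψ := by
    ext s t
    rw [Matrix.conjTranspose_apply, hPψ_apply, hPψ_apply, star_mul', star_star]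
    ring
  have hSigherm : Sigᴴ = Sig := by
    rw [hSigdef]
    have h1 : (∑ P ∈ S, P)ᴴ = ∑ P ∈ S, Pᴴ := by
      ext s t
      simp [Matrix.conjTranspose_apply, Matrix.sum_apply]
    rw [h1]
    exact Finset.sum_congr rfl hherm
  have hstarc2 : star c2 = c2 := by rw [hc2def]; simp
  have hPψSig : Pψ * Sig = c2 • Pψ := by
    have h1 := congrArg Matrix.conjTranspose hSigPψ
    rw [Matrix.conjTranspose_mul, hSigherm, hPψherm, Matrix.conjTranspose_smul,
      hPψherm, hstarc2] at h1
    exact h1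
  have hPψ2 : Pψ * Pψ = Pψ := by
    ext s t
    rw [Matrix.mul_apply, hPψ_apply]
    calc ∑ u, Pψ s u * Pψ u t
        = (ψ s * star (ψ t)) * ∑ u, ψ u * star (ψ u) := by
          rw [Finset.mul_sum]
          exact Finset.sum_congr rfl fun u _ => by rw [hPψ_apply, hPψ_apply]; ring
      _ = ψ s * star (ψ t) := by rw [hnorm, mul_one]
  have htrone : (1 : Matrix (Fin n → ZMod 2) (Fin n → ZMod 2) ℂ).trace = c2 := by
    rw [Matrix.trace_one, hc2def]
    simp [Fintype.card_pi]
  have htrSig : Sig.trace = c2 := by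
    rw [hSigdef, Matrix.trace_sum, Finset.sum_eq_single_of_mem 1 honeS]
    · exact htrone
    · intro P hP hne
      obtain ⟨μ, a, b, hμ, hPr'⟩ := hpauli P hP
      rw [hPr', Matrix.trace_smul, pauliMat_trace, smul_eq_mul]
      by_cases hab : a = 0 ∧ b = 0
      · exfalso
        obtain ⟨ha, hb⟩ := hab; subst ha; subst hb
        rw [pauliMat_zero] at hPr'
        have hsq := hsq1 P hP
        rw [hPr', Matrix.smul_mul, Matrix.mul_smul, smul_smul, mul_one] at hsq
        have hμ1 : μ * μ = 1 := hsmul1 (by rw [hsq, one_smul])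
        rcases mul_self_eq_one_iff.mp hμ1 with h | h
        · exact hne (by rw [hPr', h, one_smul])
        · rw [h] at hPr'
          exact hnoneg (hPr' ▸ hP)
      · rw [if_neg hab, mul_zero]
  have htrPψ : Pψ.trace = 1 := by
    rw [Matrix.trace]
    calc ∑ s, Pψ.diag s = ∑ s, ψ s * star (ψ s) :=
          Finset.sum_congr rfl fun s _ => rfl
      _ = 1 := hnorm
  have hSig2 : Sig * Sig = c2 • Sig := by
    have hmulSig : ∀ P ∈ S, ∑ Q ∈ S, P * Q = Sig := by
      intro P hP
      rw [hSigdef]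
      refine Finset.sum_nbij' (fun Q => P * Q) (fun Q => P * Q)
        (fun Q hQ => hgroup P hP Q hQ) (fun Q hQ => hgroup P hP Q hQ)
        (fun Q hQ => by show P * (P * Q) = Q; rw [← mul_assoc, hsq1 P hP, one_mul])
        (fun Q hQ => by show P * (P * Q) = Q; rw [← mul_assoc, hsq1 P hP, one_mul])
        (fun Q hQ => rfl)
    calc Sig * Sig = ∑ P ∈ S, ∑ Q ∈ S, P * Q := by
          rw [hSigdef, Finset.sum_mul]
          exact Finset.sum_congr rfl fun P _ => Finset.mul_sum _ _ _
      _ = ∑ P ∈ S, Sig := Finset.sum_congr rfl hmulSig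
      _ = c2 • Sig := by rw [Finset.sum_const, ← hcastc2, Nat.cast_smul_eq_nsmul]
  set K : Matrix (Fin n → ZMod 2) (Fin n → ZMod 2) ℂ := Sig - c2 • Pψ with hKdef
  have hK2 : K * K = c2 • K := by
    rw [hKdef, sub_mul, mul_sub, mul_sub, hSig2, Matrix.mul_smul, hSigPψ,
      Matrix.smul_mul, hPψSig, Matrix.smul_mul, Matrix.mul_smul, hPψ2, smul_sub]
    abel
  have hKherm : Kᴴ = K := by
    rw [hKdef, Matrix.conjTranspose_sub, hSigherm, Matrix.conjTranspose_smul,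
      hPψherm, hstarc2]
  have hKtr : K.trace = 0 := by
    rw [hKdef, Matrix.trace_sub, htrSig, Matrix.trace_smul, htrPψ, smul_eq_mul,
      mul_one, sub_self]
  have hKzero : K = 0 := by
    have h1 : (K * K).trace = 0 := by
      rw [hK2, Matrix.trace_smul, hKtr, smul_zero]
    have h2 : (K * K).trace = ∑ s, ∑ t, (Complex.normSq (K s t) : ℂ) := by
      rw [Matrix.trace]
      refine Finset.sum_congr rfl fun s _ => ?_
      rw [show (K * K).diag s = ∑ t, K s t * K t s from by
        simp [Matrix.diag, Matrix.mul_apply]]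
      refine Finset.sum_congr rfl fun t _ => ?_
      have hts : K t s = star (K s t) := by
        conv_lhs => rw [← hKherm]
        rw [Matrix.conjTranspose_apply]
      rw [hts, Complex.star_def]
      exact Complex.mul_conj _
    have h3 : ∑ s, ∑ t, Complex.normSq (K s t) = (0 : ℝ) := by
      have h4 : ((∑ s, ∑ t, Complex.normSq (K s t) : ℝ) : ℂ) = 0 := by
        push_cast
        rw [← h2, h1]
      exact_mod_cast h4
    ext s t
    rw [Matrix.zero_apply]
    have hs : ∑ t, Complex.normSq (K s t) = 0 := by
      have := (Finset.sum_eq_zero_iff_of_nonneg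
        (fun u _ => Finset.sum_nonneg fun t _ => Complex.normSq_nonneg (K u t))).mp h3
      exact this s (Finset.mem_univ s)
    have hst : Complex.normSq (K s t) = 0 := by
      have := (Finset.sum_eq_zero_iff_of_nonneg
        (fun u _ => Complex.normSq_nonneg (K s u))).mp hs
      exact this t (Finset.mem_univ t)
    exact Complex.normSq_eq_zero.mp hst
  have hSigPψeq : Sig = c2 • Pψ := by
    have := sub_eq_zero.mp hKzero
    exact this
  -- expansion of the projector
  set e : (Fin n → ZMod 2) → ℂ := fun f => chi (∑ j, f j * y j) with hedef
  have hfactor : ∀ j, (2⁻¹ : ℂ) • ((1 : Matrix (ZMod 2) (ZMod 2) ℂ) + chi (y j) • p j)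
      = ∑ x : ZMod 2, ((2⁻¹ : ℂ) * chi (x * y j)) • p j ^ x.val := by
    intro j
    rw [sum_zmod2, zero_mul, one_mul, chi_zero, mul_one,
      show (0 : ZMod 2).val = 0 from rfl, show (1 : ZMod 2).val = 1 from rfl,
      pow_zero, pow_one, smul_add, mul_smul]
  have hProjT : Proj = tensorM n (fun j => (2⁻¹ : ℂ) • (1 + chi (y j) • p j)) := hProj
  have hProjExp : Proj = ∑ f : Fin n → ZMod 2, (c2⁻¹ * e f) • Emb f := by
    rw [hProjT,
      show (fun j => (2⁻¹ : ℂ) • ((1 : Matrix (ZMod 2) (ZMod 2) ℂ) + chi (y j) • p j))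
        = fun j => ∑ x : ZMod 2, ((2⁻¹ : ℂ) * chi (x * y j)) • p j ^ x.val
        from funext hfactor,
      tensorM_sum]
    refine Finset.sum_congr rfl fun f _ => ?_
    rw [tensorM_smul n (fun j => (2⁻¹ : ℂ) * chi (f j * y j)) (fun j => p j ^ (f j).val),
      ← hEmbT]
    congr 1
    rw [Finset.prod_mul_distrib, Finset.prod_const, chi_prod, Finset.card_univ,
      Fintype.card_fin, hedef, hc2def, ← inv_pow]
  -- probability as a trace against the stabilizer sum
  have hPrPψ : Pr = (Proj * Pψ).trace := by
    rw [hPr, Matrix.trace]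
    refine Finset.sum_congr rfl fun s _ => ?_
    rw [show (Proj * Pψ).diag s = ∑ u, Proj s u * Pψ u s from by
      simp [Matrix.diag, Matrix.mul_apply],
      show (Proj.mulVec ψ) s = ∑ u, Proj s u * ψ u from rfl, Finset.mul_sum]
    refine Finset.sum_congr rfl fun u _ => ?_
    rw [hPψ_apply]; ring
  have hPψinv : Pψ = c2⁻¹ • Sig := by
    rw [hSigPψeq, smul_smul, inv_mul_cancel₀ hc2ne, one_smul]
  have hPr1 : Pr = c2⁻¹ * ∑ P ∈ S, (Proj * P).trace := by
    rw [hPrPψ, hPψinv, Matrix.mul_smul, Matrix.trace_smul, smul_eq_mul, hSigdef,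
      Matrix.mul_sum, Matrix.trace_sum]
  set xf : (Fin n → ZMod 2) → ℂ := fun f => ∑ P ∈ S, (Emb f * P).trace with hxfdef
  have htrProjP : ∀ P, (Proj * P).trace = c2⁻¹ * ∑ f : Fin n → ZMod 2,
      e f * (Emb f * P).trace := by
    intro P
    have h1 : Proj * P = ∑ f : Fin n → ZMod 2, (c2⁻¹ * e f) • (Emb f * P) := by
      rw [hProjExp, Matrix.sum_mul]
      exact Finset.sum_congr rfl fun f _ => Matrix.smul_mul _ _ _
    rw [h1, Matrix.trace_sum, Finset.mul_sum]
    exact Finset.sum_congr rfl fun f _ => by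
      rw [Matrix.trace_smul, smul_eq_mul]; ring
  have hPr2 : Pr = c2⁻¹ * (c2⁻¹ * ∑ f : Fin n → ZMod 2, e f * xf f) := by
    rw [hPr1]
    congr 1
    rw [Finset.sum_congr rfl fun P _ => htrProjP P, ← Finset.mul_sum]
    congr 1
    rw [Finset.sum_comm]
    refine Finset.sum_congr rfl fun f _ => ?_
    rw [show xf f = ∑ P ∈ S, (Emb f * P).trace from rfl, Finset.mul_sum]
  -- which Emb f appear (up to sign) in the stabilizer group
  set lamOf : (Fin n → ZMod 2) → ZMod 2 :=
    fun f => if h : ∃ lam : ZMod 2, chi lam • Emb f ∈ S then h.choose else 0 with hlamdef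
  have hlamspec : ∀ f, (∃ lam : ZMod 2, chi lam • Emb f ∈ S) →
      chi (lamOf f) • Emb f ∈ S := by
    intro f h
    rw [hlamdef]
    simp only
    rw [dif_pos h]
    exact h.choose_spec
  have huniq : ∀ (f : Fin n → ZMod 2) (l l' : ZMod 2),
      chi l • Emb f ∈ S → chi l' • Emb f ∈ S → l = l' := by
    intro f l l' h h'
    by_contra hne
    have hmul := hgroup _ h _ h'
    rw [Matrix.smul_mul, Matrix.mul_smul, smul_smul, ← chi_add, hEmbSq f] at hmul
    have h1 : l + l' = 1 := by
      rcases zmod2_cases l with rfl | rfl <;> rcases zmod2_cases l' with rfl | rfl <;>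
        first | exact absurd rfl hne | decide
    rw [h1, chi_one] at hmul
    exact hnoneg hmul
  have key1 : ∀ f, ∀ P ∈ S, (∃ lam : ZMod 2, P = chi lam • Emb f) ∨
      (Emb f * P).trace = 0 := by
    intro f P hP
    obtain ⟨μ, a, b, hμ, hP'⟩ := hpauli P hP
    by_cases hab : A f = a ∧ B f = b
    · left
      obtain ⟨ha, hb⟩ := hab
      have hPE : P = (μ * (ν f)⁻¹) • Emb f := by
        rw [hEmbRep f, smul_smul, mul_assoc, inv_mul_cancel₀ (hνne f), mul_one, hP',
          ha, hb]
      have hcc : (μ * (ν f)⁻¹) * (μ * (ν f)⁻¹) = 1 := by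
        have h1 := hsq1 P hP
        rw [hPE, Matrix.smul_mul, Matrix.mul_smul, smul_smul, hEmbSq f] at h1
        exact hsmul1 (show _ • (1 : Matrix (Fin n → ZMod 2) (Fin n → ZMod 2) ℂ)
          = (1 : ℂ) • 1 from by rw [one_smul, h1])
      rcases mul_self_eq_one_iff.mp hcc with h | h
      · exact ⟨0, by rw [chi_zero, one_smul, hPE, h, one_smul]⟩
      · exact ⟨1, by rw [chi_one, hPE, h]⟩
    · right
      rw [hP', hEmbRep f, Matrix.smul_mul, Matrix.mul_smul, pauliMat_mul, smul_smul,
        smul_smul, Matrix.trace_smul, pauliMat_trace, smul_eq_mul]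
      rw [if_neg, mul_zero]
      rintro ⟨h1, h2⟩
      exact hab ⟨funext fun j => zmod2_eq_of_add_eq_zero (congrFun h1 j),
        funext fun j => zmod2_eq_of_add_eq_zero (congrFun h2 j)⟩
  have hxf : ∀ f, xf f =
      if ∃ lam : ZMod 2, chi lam • Emb f ∈ S then chi (lamOf f) * c2 else 0 := by
    intro f
    by_cases hg : ∃ lam : ZMod 2, chi lam • Emb f ∈ S
    · rw [if_pos hg, show xf f = ∑ P ∈ S, (Emb f * P).trace from rfl]
      have hP0 := hlamspec f hg
      rw [Finset.sum_eq_single_of_mem _ hP0]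
      · rw [Matrix.mul_smul, Matrix.trace_smul, hEmbSq f, smul_eq_mul, htrone]
      · intro Q hQ hne
        rcases key1 f Q hQ with ⟨l, hl⟩ | h0
        · exfalso
          apply hne
          have hlS : chi l • Emb f ∈ S := hl ▸ hQ
          rw [hl, huniq f l (lamOf f) hlS hP0]
        · exact h0
    · rw [if_neg hg, show xf f = ∑ P ∈ S, (Emb f * P).trace from rfl]
      refine Finset.sum_eq_zero fun Q hQ => ?_
      rcases key1 f Q hQ with ⟨l, hl⟩ | h0
      · exact absurd ⟨l, hl ▸ hQ⟩ hg
      · exact h0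
  set F : Finset (Fin n → ZMod 2) :=
    Finset.univ.filter (fun f => ∃ lam : ZMod 2, chi lam • Emb f ∈ S) with hFdef
  have hPr3 : Pr = c2⁻¹ * ∑ f ∈ F, chi ((∑ j, f j * y j) + lamOf f) := by
    rw [hPr2]
    have h1 : ∑ f : Fin n → ZMod 2, e f * xf f
        = ∑ f ∈ F, e f * (chi (lamOf f) * c2) := by
      rw [Finset.sum_congr rfl fun f _ => by rw [hxf f]]
      rw [hFdef, Finset.sum_filter]
      exact Finset.sum_congr rfl fun f _ => by rw [mul_ite, mul_zero]
    rw [h1]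
    have h2 : ∑ f ∈ F, e f * (chi (lamOf f) * c2)
        = (∑ f ∈ F, chi ((∑ j, f j * y j) + lamOf f)) * c2 := by
      rw [Finset.sum_mul]
      exact Finset.sum_congr rfl fun f _ => by rw [hedef, chi_add]; ring
    rw [h2]
    field_simp
  -- T is the image of F
  have hT_image : T = F.image (fun f => chi (lamOf f) • Emb f) := by
    ext Q
    constructor
    · intro hQT
      rw [hT] at hQT
      obtain ⟨hQS, f, lam, hQrep⟩ := Finset.mem_filter.mp hQT
      rw [show ((-1 : ℂ) ^ lam.val) = chi lam from rfl] at hQrep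
      have hfS : chi lam • Emb f ∈ S := by rw [← hQrep]; exact hQS
      have hfF : f ∈ F := Finset.mem_filter.mpr ⟨Finset.mem_univ _, ⟨lam, hfS⟩⟩
      refine Finset.mem_image.mpr ⟨f, hfF, ?_⟩
      rw [huniq f (lamOf f) lam (hlamspec f ⟨lam, hfS⟩) hfS, ← hQrep]
    · intro hQ
      obtain ⟨f, hfF, hQrep⟩ := Finset.mem_image.mp hQ
      have hfS := hlamspec f (Finset.mem_filter.mp hfF).2
      rw [hT]
      refine Finset.mem_filter.mpr ⟨by rw [← hQrep]; exact hfS, f, lamOf f, ?_⟩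
      rw [show ((-1 : ℂ) ^ (lamOf f).val) = chi (lamOf f) from rfl]
      exact hQrep.symm
  have hcardTF : T.card = F.card := by
    rw [hT_image]
    exact Finset.card_image_of_injOn fun f _ g _ h => hEmbInj (lamOf f) (lamOf g) f g h
  constructor
  · -- consistent case
    intro H
    have hdot : ∀ f ∈ F, (∑ j, f j * y j) = lamOf f := by
      intro f hf
      refine H (chi (lamOf f) • Emb f) ?_ f (lamOf f) rfl
      rw [hT_image]
      exact Finset.mem_image_of_mem _ hf
    rw [hPr3,
      Finset.sum_congr rfl fun f hf => by rw [hdot f hf, zmod2_add_self, chi_zero],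
      Finset.sum_const, nsmul_eq_mul, mul_one, hcardTF, hc2def]
    rw [inv_mul_eq_div]
  · -- inconsistent case
    intro H
    push_neg at H
    obtain ⟨Q, hQT, f0, lam, hQrep, hne⟩ := H
    rw [show ((-1 : ℂ) ^ lam.val) = chi lam from rfl] at hQrep
    have hQS : Q ∈ S := by rw [hT] at hQT; exact (Finset.mem_filter.mp hQT).1
    have hf0S : chi lam • Emb f0 ∈ S := by rw [← hQrep]; exact hQS
    have hf0F : f0 ∈ F := Finset.mem_filter.mpr ⟨Finset.mem_univ _, ⟨lam, hf0S⟩⟩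
    have hlam0 : lamOf f0 = lam := huniq f0 _ _ (hlamspec f0 ⟨lam, hf0S⟩) hf0S
    have hφ : (∑ j, f0 j * y j) + lamOf f0 = 1 := by
      rw [hlam0]
      apply zmod2_ne_zero
      intro hc
      exact hne (zmod2_eq_of_add_eq_zero hc)
    have hFadd : ∀ f ∈ F, ∀ g ∈ F, (f + g) ∈ F ∧ lamOf (f + g) = lamOf f + lamOf g := by
      intro f hf g hg
      have h1 := hlamspec f (Finset.mem_filter.mp hf).2
      have h2 := hlamspec g (Finset.mem_filter.mp hg).2
      have hmul := hgroup _ h1 _ h2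
      rw [Matrix.smul_mul, Matrix.mul_smul, smul_smul, ← chi_add, hEmbAdd] at hmul
      have hgood : ∃ l : ZMod 2, chi l • Emb (f + g) ∈ S := ⟨_, hmul⟩
      exact ⟨Finset.mem_filter.mpr ⟨Finset.mem_univ _, hgood⟩,
        huniq _ _ _ (hlamspec _ hgood) hmul⟩
    have hinv : ∀ f : Fin n → ZMod 2, f + f0 + f0 = f := by
      intro f
      funext j
      rw [Pi.add_apply, Pi.add_apply, add_assoc, zmod2_add_self, add_zero]
    set Sig0 : ℂ := ∑ f ∈ F, chi ((∑ j, f j * y j) + lamOf f) with hSig0def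
    have hflip : Sig0 = -Sig0 := by
      have hre : ∑ f ∈ F, chi ((∑ j, f j * y j) + lamOf f)
          = ∑ f ∈ F, chi ((∑ j, (f + f0) j * y j) + lamOf (f + f0)) := by
        refine Finset.sum_nbij' (fun f => f + f0) (fun f => f + f0)
          (fun f hf => (hFadd f hf f0 hf0F).1) (fun f hf => (hFadd f hf f0 hf0F).1)
          (fun f hf => hinv f) (fun f hf => hinv f) (fun f hf => ?_)
        rw [hinv f]
      have hterm : ∀ f ∈ F, chi ((∑ j, (f + f0) j * y j) + lamOf (f + f0))
          = -chi ((∑ j, f j * y j) + lamOf f) := by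
        intro f hf
        have hd : (∑ j, (f + f0) j * y j) = (∑ j, f j * y j) + (∑ j, f0 j * y j) := by
          rw [← Finset.sum_add_distrib]
          exact Finset.sum_congr rfl fun j _ => by rw [Pi.add_apply, add_mul]
        rw [hd, (hFadd f hf f0 hf0F).2,
          show (∑ j, f j * y j) + (∑ j, f0 j * y j) + (lamOf f + lamOf f0)
            = ((∑ j, f j * y j) + lamOf f) + ((∑ j, f0 j * y j) + lamOf f0) from by ring,
          chi_add, hφ, chi_one]
        ring
      calc Sig0 = ∑ f ∈ F, chi ((∑ j, (f + f0) j * y j) + lamOf (f + f0)) := by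
            rw [hSig0def, hre]
        _ = ∑ f ∈ F, -chi ((∑ j, f j * y j) + lamOf f) :=
            Finset.sum_congr rfl hterm
        _ = -Sig0 := by rw [hSig0def, ← Finset.sum_neg_distrib]
    have hSig00 : Sig0 = 0 := by
      have h2 : (2 : ℂ) * Sig0 = 0 := by
        rw [two_mul]
        nth_rewrite 1 [hflip]
        ring
      rcases mul_eq_zero.mp h2 with h | h
      · exact absurd h two_ne_zero
      · exact h
    rw [hPr3, hSig00, mul_zero]
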